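/- Let f : H → ℝ be a convex lower semicontinuous function on a real Hilbert space with nonempty sublevel set S := {x : f(x) ≤ 0}, and for each x with f(x) > 0 let g(x) ∈ ∂f(x) be a chosen subgradient. Define the subgradient projection P_f(x) := x − (f(x)/‖g(x)‖²)·g(x) if f(x) > 0 and P_f(x) := x otherwise. Then P_f is a cutter and Fix P_f = S. -/

import Mathlib

open RealInnerProductSpace

theorem subgradient_projection_is_cutter
    {H : Type*} [NormedAddCommGroup H] [InnerProductSpace ℝ H]
    (f : H → ℝ) (hconv : ConvexOn ℝ Set.univ f) (hlsc : LowerSemicontinuous f)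
    (hS : ({x : H | f x ≤ 0}).Nonempty)
    (g : H → H)
    (hg : ∀ x : H, 0 < f x → ∀ y : H, f x + ⟪g x, y - x⟫ ≤ f y) :
    (∀ (x z : H), f z ≤ 0 →
        ⟪z - (if 0 < f x then x - (f x / ‖g x‖ ^ 2) • g x else x),
          x - (if 0 < f x then x - (f x / ‖g x‖ ^ 2) • g x else x)⟫ ≤ 0) ∧
      {z : H | (if 0 < f z then z - (f z / ‖g z‖ ^ 2) • g z else z) = z} =
        {x : H | f x ≤ 0} := by
  obtain ⟨z0, hz0⟩ := hS
  have hgne : ∀ x : H, 0 < f x → g x ≠ 0 := by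
    intro x hx hgx
    have := hg x hx z0
    rw [hgx] at this
    simp at this
    simp only [Set.mem_setOf_eq] at hz0; linarith
  constructor
  · intro x z hz
    by_cases hx : 0 < f x
    · simp only [if_pos hx]
      have hgn : (0:ℝ) < ‖g x‖ ^ 2 := by
        have := hgne x hx
        exact pow_pos (norm_pos_iff.mpr this) 2
      set t : ℝ := f x / ‖g x‖ ^ 2 with ht
      have hsub : ⟪g x, z - x⟫ ≤ -f x := by
        have := hg x hx z
        linarith
      have key : z - (x - t • g x) = (z - x) + t • g x := by abel
      have key2 : x - (x - t • g x) = t • g x := by abel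
      rw [key, key2, inner_add_left, real_inner_smul_right, real_inner_smul_left,
        real_inner_smul_right, real_inner_self_eq_norm_sq, real_inner_comm]
      have ht2 : t * ‖g x‖ ^ 2 = f x := by
        rw [ht, div_mul_cancel₀]
        exact hgn.ne'
      have htpos : 0 < t := div_pos hx hgn
      nlinarith [mul_le_mul_of_nonneg_left hsub htpos.le]
    · simp only [if_neg hx]
      simp
  · ext x
    simp only [Set.mem_setOf_eq]
    constructor
    · intro h
      by_contra hx
      push_neg at hx
      rw [if_pos hx] at h
      have : (f x / ‖g x‖ ^ 2) • g x = 0 := by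
        have := sub_eq_self.mp h
        exact this
      have hgn : (0:ℝ) < ‖g x‖ ^ 2 := by
        have := hgne x hx
        exact pow_pos (norm_pos_iff.mpr this) 2
      rcases smul_eq_zero.mp this with h1 | h2
      · have : f x = 0 := by
          field_simp at h1
          exact (div_eq_zero_iff.mp h1).resolve_right hgn.ne'
        linarith
      · exact hgne x hx h2
    · intro h
      rw [if_neg (not_lt.mpr h)]
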